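/- Let m ∈ (1,2], β ∈ [m, m+1], and u = u_0 u_1 … ∈ {0,1}^ℕ, u ≠ 0^ω. Then u is the unique β-expansion of its value over the alphabet {0,1,m} if and only if for every i ≥ 0 with u_i = 1 one has m/(β−1) < 1 + Σ_{k≥1} u_{i+k} β^{-k} < m. -/

import Mathlib

namespace Stmt9Aux

variable {β : ℝ}

lemma pow_pos' (hβ : 1 < β) (k : ℕ) : (0:ℝ) < β ^ (k+1) :=
  pow_pos (lt_trans one_pos hβ) _

lemma summable_aux (hβ : 1 < β) (w : ℕ → ℝ) (c : ℝ) (h : ∀ k, |w k| ≤ c) :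
    Summable fun k => w k / β ^ (k+1) := by
  have hb0 : (0:ℝ) < β := lt_trans one_pos hβ
  have hr : β⁻¹ < 1 := inv_lt_one_of_one_lt₀ hβ
  have hr0 : (0:ℝ) ≤ β⁻¹ := inv_nonneg.2 hb0.le
  have hg : Summable fun k : ℕ => c * β⁻¹ * β⁻¹ ^ k :=
    ((summable_geometric_of_lt_one hr0 hr).mul_left _)
  refine Summable.of_norm_bounded hg ?_
  intro k
  have h1 : ‖w k / β ^ (k+1)‖ = |w k| / β ^ (k+1) := by
    rw [Real.norm_eq_abs, abs_div, abs_of_pos (pow_pos' hβ k)]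
  rw [h1]
  have hpow : c * β⁻¹ * β⁻¹ ^ k = c / β ^ (k+1) := by
    rw [div_eq_mul_inv, ← inv_pow, pow_succ]; ring
  rw [hpow]
  exact div_le_div_of_nonneg_right (h k) (pow_pos' hβ k).le

lemma tsum_geom (hβ : 1 < β) (c : ℝ) : (∑' k : ℕ, c / β ^ (k+1)) = c / (β - 1) := by
  have hb0 : (0:ℝ) < β := lt_trans one_pos hβ
  have hr : β⁻¹ < 1 := inv_lt_one_of_one_lt₀ hβ
  have hr0 : (0:ℝ) ≤ β⁻¹ := inv_nonneg.2 hb0.le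
  have h1 : ∀ k : ℕ, c / β ^ (k+1) = c * β⁻¹ * β⁻¹ ^ k := by
    intro k
    rw [div_eq_mul_inv, ← inv_pow, pow_succ]; ring
  rw [tsum_congr h1, tsum_mul_left, tsum_geometric_of_lt_one hr0 hr]
  have hβ1 : β - 1 ≠ 0 := by nlinarith
  have h2 : (1 - β⁻¹) = (β-1)/β := by rw [sub_div, div_self hb0.ne', one_div]
  rw [h2, inv_div]
  calc c * β⁻¹ * (β/(β-1)) = c * (β⁻¹ * β) / (β-1) := by ring
    _ = c / (β-1) := by rw [inv_mul_cancel₀ hb0.ne', mul_one]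

lemma tsum_nonneg' (hβ : 1 < β) (w : ℕ → ℝ) (h0 : ∀ k, 0 ≤ w k) :
    0 ≤ ∑' k : ℕ, w k / β ^ (k+1) :=
  tsum_nonneg fun k => div_nonneg (h0 k) (pow_pos' hβ k).le

lemma tsum_le_bound (hβ : 1 < β) (w : ℕ → ℝ) (c : ℝ) (h0 : ∀ k, 0 ≤ w k)
    (hc : ∀ k, w k ≤ c) : (∑' k : ℕ, w k / β ^ (k+1)) ≤ c / (β - 1) := by
  have habs : ∀ k, |w k| ≤ c := fun k => by rw [abs_of_nonneg (h0 k)]; exact hc k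
  have := Summable.tsum_le_tsum (f := fun k : ℕ => w k / β ^ (k+1)) (g := fun k : ℕ => c / β ^ (k+1))
    (fun k => div_le_div_of_nonneg_right (hc k) (pow_pos' hβ k).le)
    (summable_aux hβ w c habs)
    (summable_aux hβ (fun _ => c) c (fun k => by
      rw [abs_of_nonneg ((abs_nonneg (w 0)).trans (habs 0))]))
  rw [tsum_geom hβ c] at this
  exact this

lemma head_split (hβ : 1 < β) (w : ℕ → ℝ) (c : ℝ) (h : ∀ k, |w k| ≤ c) :
    (∑' k : ℕ, w k / β ^ (k+1)) = w 0 / β + (∑' k : ℕ, w (k+1) / β ^ (k+1)) / β := by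
  have hs := summable_aux hβ w c h
  rw [Summable.tsum_eq_zero_add hs]
  have h1 : ∀ k : ℕ, w (k+1) / β ^ (k+1+1) = (w (k+1) / β ^ (k+1)) * β⁻¹ := by
    intro k
    rw [pow_succ, div_mul_eq_div_div, div_eq_mul_inv (w (k+1) / β ^ (k+1))]
  rw [tsum_congr h1, tsum_mul_right]
  rw [pow_one, div_eq_mul_inv (∑' k : ℕ, w (k+1) / β ^ (k+1))]

lemma prefix_split (hβ : 1 < β) (w : ℕ → ℝ) (c : ℝ) (h : ∀ k, |w k| ≤ c) (n : ℕ) :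
    (∑' k : ℕ, w k / β ^ (k+1)) =
      (∑ k ∈ Finset.range n, w k / β ^ (k+1)) +
        (∑' k : ℕ, w (n + k) / β ^ (k+1)) / β ^ n := by
  induction n with
  | zero => simp
  | succ n ih =>
    rw [ih, Finset.sum_range_succ]
    have hsplit := head_split hβ (fun k => w (n + k)) c (fun k => h (n + k))
    simp only [add_zero] at hsplit
    rw [hsplit]
    have hb0 : (0:ℝ) < β := lt_trans one_pos hβ
    have h1 : ∀ k : ℕ, w (n + (k+1)) = w (n + 1 + k) := by
      intro k; congr 1; omega
    rw [tsum_congr fun k => by rw [h1 k]]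
    rw [pow_succ]
    field_simp
    ring

/-- tail splitting: from tail at `a`, split off `n` digits. -/
lemma tail_split (hβ : 1 < β) (w : ℕ → ℝ) (c : ℝ) (h : ∀ k, |w k| ≤ c) (a n : ℕ) :
    (∑' k : ℕ, w (a + k) / β ^ (k+1)) =
      (∑ k ∈ Finset.range n, w (a + k) / β ^ (k+1)) +
        (∑' k : ℕ, w (a + n + k) / β ^ (k+1)) / β ^ n := by
  have := prefix_split hβ (fun j => w (a + j)) c (fun k => h _) n
  rw [this]
  congr 1
  congr 1
  exact tsum_congr fun k => by rw [show a + (n + k) = a + n + k from by omega]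

lemma tail_head (hβ : 1 < β) (w : ℕ → ℝ) (c : ℝ) (h : ∀ k, |w k| ≤ c) (a : ℕ) :
    (∑' k : ℕ, w (a + k) / β ^ (k+1)) =
      w a / β + (∑' k : ℕ, w (a + 1 + k) / β ^ (k+1)) / β := by
  have := head_split hβ (fun j => w (a + j)) c (fun k => h _)
  simp only [add_zero] at this
  rw [this]
  congr 2
  exact tsum_congr fun k => by rw [show a + (k + 1) = a + 1 + k from by omega]

noncomputable def dig (m β z : ℝ) : ℝ :=
  if m ≤ β * z then m else if 1 ≤ β * z then 1 else 0

noncomputable def yseq (m β y : ℝ) : ℕ → ℝ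
  | 0 => y
  | n + 1 => β * yseq m β y n - dig m β (yseq m β y n)

lemma dig_mem (m β z : ℝ) : dig m β z = 0 ∨ dig m β z = 1 ∨ dig m β z = m := by
  unfold dig; split_ifs <;> tauto

lemma yseq_mem (m β : ℝ) (hm1 : 1 < m) (hm2 : m ≤ 2) (hβ1 : m ≤ β) (hβ2 : β ≤ m + 1)
    (y : ℝ) (hy0 : 0 ≤ y) (hyM : y ≤ m / (β - 1)) (n : ℕ) :
    0 ≤ yseq m β y n ∧ yseq m β y n ≤ m / (β - 1) := by
  have hβ : (1:ℝ) < β := lt_of_lt_of_le hm1 hβ1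
  have hb1 : (0:ℝ) < β - 1 := by linarith
  induction n with
  | zero => exact ⟨hy0, hyM⟩
  | succ n ih =>
    obtain ⟨h0, hM⟩ := ih
    have hβM : β * (m / (β - 1)) = m + m / (β - 1) := by
      field_simp; ring
    have hstep : yseq m β y (n+1) = β * yseq m β y n - dig m β (yseq m β y n) := rfl
    rw [hstep]
    unfold dig
    split_ifs with h1 h2
    · constructor
      · linarith
      · have : β * yseq m β y n ≤ β * (m / (β - 1)) :=
          mul_le_mul_of_nonneg_left hM (by linarith)
        rw [hβM] at this; linarith
    · push_neg at h1
      constructor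
      · linarith
      · have hM1 : (1:ℝ) ≤ m / (β - 1) := by
          rw [le_div_iff₀ hb1]; linarith
        linarith
    · push_neg at h1 h2
      constructor
      · have := mul_nonneg (by linarith : (0:ℝ) ≤ β) h0; linarith
      · have hM1 : (1:ℝ) ≤ m / (β - 1) := by
          rw [le_div_iff₀ hb1]; linarith
        linarith

lemma yseq_partial (m β y : ℝ) (hb : β ≠ 0) (n : ℕ) :
    y = (∑ k ∈ Finset.range n, dig m β (yseq m β y k) / β ^ (k+1)) + yseq m β y n / β ^ n := by
  induction n with
  | zero => simp [yseq]
  | succ n ih =>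
    rw [Finset.sum_range_succ,
      show yseq m β y (n+1) = β * yseq m β y n - dig m β (yseq m β y n) from rfl]
    conv_lhs => rw [ih]
    have hpow : (β:ℝ) ^ n ≠ 0 := pow_ne_zero _ hb
    rw [add_assoc]
    congr 1
    rw [pow_succ]
    field_simp
    ring

theorem exists_expansion (m β : ℝ) (hm1 : 1 < m) (hm2 : m ≤ 2) (hβ1 : m ≤ β)
    (hβ2 : β ≤ m + 1) (y : ℝ) (hy0 : 0 ≤ y) (hyM : y ≤ m / (β - 1)) :
    ∃ w : ℕ → ℝ, (∀ k, w k = 0 ∨ w k = 1 ∨ w k = m) ∧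
      (∑' k : ℕ, w k / β ^ (k+1)) = y := by
  have hβ : (1:ℝ) < β := lt_of_lt_of_le hm1 hβ1
  have hb0 : (0:ℝ) < β := lt_trans one_pos hβ
  have hr : β⁻¹ < 1 := inv_lt_one_of_one_lt₀ hβ
  have hr0 : (0:ℝ) ≤ β⁻¹ := inv_nonneg.2 hb0.le
  refine ⟨fun k => dig m β (yseq m β y k), fun k => dig_mem _ _ _, ?_⟩
  have hmem := yseq_mem m β hm1 hm2 hβ1 hβ2 y hy0 hyM
  have habs : ∀ k, |dig m β (yseq m β y k)| ≤ m := by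
    intro k
    rcases dig_mem m β (yseq m β y k) with h | h | h <;> rw [h]
    · rw [abs_zero]; linarith
    · rw [abs_one]; linarith
    · rw [abs_of_pos (by linarith)]
  have hsum := summable_aux hβ _ m habs
  have htend : Filter.Tendsto (fun n => ∑ k ∈ Finset.range n, dig m β (yseq m β y k) / β ^ (k+1))
      Filter.atTop (nhds (∑' k : ℕ, dig m β (yseq m β y k) / β ^ (k+1))) :=
    hsum.hasSum.tendsto_sum_nat
  have htend2 : Filter.Tendsto (fun n => ∑ k ∈ Finset.range n, dig m β (yseq m β y k) / β ^ (k+1))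
      Filter.atTop (nhds y) := by
    have heq : ∀ n, (∑ k ∈ Finset.range n, dig m β (yseq m β y k) / β ^ (k+1))
        = y - yseq m β y n / β ^ n := by
      intro n; linarith [yseq_partial m β y hb0.ne' n]
    rw [funext heq]
    have h0 : Filter.Tendsto (fun n : ℕ => yseq m β y n / β ^ n) Filter.atTop (nhds 0) := by
      apply squeeze_zero (fun n => div_nonneg (hmem n).1 (pow_pos hb0 n).le)
        (g := fun n => (m / (β - 1)) * β⁻¹ ^ n)
      · intro n
        rw [inv_pow, ← div_eq_mul_inv]
        exact div_le_div_of_nonneg_right (hmem n).2 (pow_pos hb0 n).le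
      · have := (tendsto_pow_atTop_nhds_zero_of_lt_one hr0 hr).const_mul (m / (β - 1))
        simpa using this
    have := Filter.Tendsto.sub (tendsto_const_nhds (x := y)) h0
    simpa using this
  exact tendsto_nhds_unique htend htend2


lemma div_cancel {a b c : ℝ} (hc : c ≠ 0) (h : a / c = b / c) : a = b := by
  field_simp at h; exact h

lemma tail_lt_one (m : ℝ) {β : ℝ} (hm1 : 1 < m) (hm2 : m ≤ 2) (hβ1 : m ≤ β) (u : ℕ → Bool)
    (hcond : ∀ i : ℕ, u i = true →
      1 + (∑' k : ℕ, (if u (i + 1 + k) then (1:ℝ) else 0) / β ^ (k + 1)) < m)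
    (n : ℕ) : (∑' k : ℕ, (if u (n + k) then (1:ℝ) else 0) / β ^ (k + 1)) < 1 := by
  have hβ : (1:ℝ) < β := lt_of_lt_of_le hm1 hβ1
  have hb0 : (0:ℝ) < β := by linarith
  have habs : ∀ k, |(if u k then (1:ℝ) else 0)| ≤ m := by
    intro k; split_ifs
    · rw [abs_one]; linarith
    · rw [abs_zero]; linarith
  by_cases hall : ∀ j, u (n + j) = false
  · have hz : ∀ k : ℕ, (if u (n + k) then (1:ℝ) else 0) / β ^ (k+1) = (0:ℝ) := by
      intro k; rw [hall k]; simp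
    rw [tsum_congr hz, tsum_zero]; norm_num
  · push_neg at hall
    obtain ⟨j, hj⟩ := hall
    have hj' : u (n + j) = true := by simpa using hj
    have hex : ∃ j, u (n + j) = true := ⟨j, hj'⟩
    set j₀ := Nat.find hex with hj₀def
    have hj₀ : u (n + j₀) = true := Nat.find_spec hex
    have hlt : ∀ k < j₀, u (n + k) = false := by
      intro k hk
      have := Nat.find_min hex hk
      simpa using this
    have hsplit : (∑' k : ℕ, (if u (n + k) then (1:ℝ) else 0) / β ^ (k+1)) =
        (∑ k ∈ Finset.range j₀, (if u (n + k) then (1:ℝ) else 0) / β ^ (k+1)) +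
          (∑' k : ℕ, (if u (n + j₀ + k) then (1:ℝ) else 0) / β ^ (k+1)) / β ^ j₀ :=
      tail_split hβ (fun j => if u j then (1:ℝ) else 0) m habs n j₀
    have hpre : (∑ k ∈ Finset.range j₀, (if u (n + k) then (1:ℝ) else 0) / β ^ (k+1)) = 0 :=
      Finset.sum_eq_zero fun k hk => by
        rw [hlt k (Finset.mem_range.1 hk)]; simp
    have hhead : (∑' k : ℕ, (if u (n + j₀ + k) then (1:ℝ) else 0) / β ^ (k+1)) =
        (if u (n + j₀) then (1:ℝ) else 0) / β +
          (∑' k : ℕ, (if u (n + j₀ + 1 + k) then (1:ℝ) else 0) / β ^ (k+1)) / β :=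
      tail_head hβ (fun j => if u j then (1:ℝ) else 0) m habs (n + j₀)
    set s := (∑' k : ℕ, (if u (n + j₀ + 1 + k) then (1:ℝ) else 0) / β ^ (k+1)) with hsdef
    have hs0 : 0 ≤ s :=
      tsum_nonneg' hβ (fun k => if u (n + j₀ + 1 + k) then (1:ℝ) else 0)
        (fun k => by split_ifs <;> norm_num)
    have hc := hcond (n + j₀) hj₀
    have hT1 : (∑' k : ℕ, (if u (n + j₀ + k) then (1:ℝ) else 0) / β ^ (k+1)) < 1 := by
      rw [hhead, hj₀, if_pos rfl, ← add_div, div_lt_one hb0]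
      linarith
    have hT0 : 0 ≤ (∑' k : ℕ, (if u (n + j₀ + k) then (1:ℝ) else 0) / β ^ (k+1)) :=
      tsum_nonneg' hβ (fun k => if u (n + j₀ + k) then (1:ℝ) else 0) (fun k => by split_ifs <;> norm_num)
    rw [hsplit, hpre, zero_add]
    calc (∑' k : ℕ, (if u (n + j₀ + k) then (1:ℝ) else 0) / β ^ (k+1)) / β ^ j₀
        ≤ (∑' k : ℕ, (if u (n + j₀ + k) then (1:ℝ) else 0) / β ^ (k+1)) :=
          div_le_self hT0 (one_le_pow₀ hβ.le)
      _ < 1 := hT1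


end Stmt9Aux

open Stmt9Aux in
/-- for m ∈ (1,2], β ∈ [m, m+1] and u ∈ {0,1}^ℕ \ {0^ω}, u is the unique
β-expansion of its value over {0,1,m} iff m/(β−1) < 1 + Σ_{k≥1} u_{i+k} β^{-k} < m
whenever u_i = 1. -/
theorem stmt_9 (m β : ℝ) (hm1 : 1 < m) (hm2 : m ≤ 2) (hβ1 : m ≤ β) (hβ2 : β ≤ m + 1)
    (u : ℕ → Bool) (hu : u ≠ fun _ => false) :
    ((∀ v : ℕ → ℝ, (∀ k, v k = 0 ∨ v k = 1 ∨ v k = m) →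
        (∑' k : ℕ, v k / β ^ (k + 1)) =
          (∑' k : ℕ, (if u k then (1 : ℝ) else 0) / β ^ (k + 1)) →
        v = fun k => if u k then (1 : ℝ) else 0)
      ↔ (∀ i : ℕ, u i = true →
          m / (β - 1) < 1 + (∑' k : ℕ, (if u (i + 1 + k) then (1 : ℝ) else 0) / β ^ (k + 1)) ∧
          1 + (∑' k : ℕ, (if u (i + 1 + k) then (1 : ℝ) else 0) / β ^ (k + 1)) < m)) := by
  classical
  have hβ : (1:ℝ) < β := lt_of_lt_of_le hm1 hβ1
  have hb0 : (0:ℝ) < β := by linarith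
  have hb1 : (0:ℝ) < β - 1 := by linarith
  have habsU : ∀ k, |(if u k then (1:ℝ) else 0)| ≤ m := by
    intro k; split_ifs
    · rw [abs_one]; linarith
    · rw [abs_zero]; linarith
  constructor
  · -- uniqueness implies the conditions
    intro huniq i hi
    have hs0 : 0 ≤ (∑' k : ℕ, (if u (i + 1 + k) then (1:ℝ) else 0) / β ^ (k + 1)) :=
      tsum_nonneg' hβ (fun k => if u (i + 1 + k) then (1:ℝ) else 0)
        (fun k => by split_ifs <;> norm_num)
    have hs1 : (∑' k : ℕ, (if u (i + 1 + k) then (1:ℝ) else 0) / β ^ (k + 1)) ≤ 1 / (β - 1) :=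
      tsum_le_bound hβ (fun k => if u (i + 1 + k) then (1:ℝ) else 0) 1
        (fun k => by split_ifs <;> norm_num)
        (fun k => by split_ifs <;> norm_num)
    set s := (∑' k : ℕ, (if u (i + 1 + k) then (1:ℝ) else 0) / β ^ (k + 1)) with hsdef
    constructor
    · by_contra hle
      push_neg at hle
      obtain ⟨w, hwmem, hwsum⟩ := exists_expansion m β hm1 hm2 hβ1 hβ2 (1 + s)
        (by linarith) hle
      set v : ℕ → ℝ := fun k =>
        if k < i then (if u k then (1:ℝ) else 0) else if k = i then 0 else w (k - (i+1))
        with hvdef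
      have hv_lt : ∀ k, k < i → v k = (if u k then (1:ℝ) else 0) := by
        intro k hk; rw [hvdef]; dsimp only; rw [if_pos hk]
      have hv_i : v i = 0 := by
        rw [hvdef]; dsimp only; rw [if_neg (lt_irrefl i), if_pos rfl]
      have hvtail : ∀ k, v (i + 1 + k) = w k := by
        intro k; rw [hvdef]; dsimp only
        rw [if_neg (by omega), if_neg (by omega)]
        congr 1; omega
      have hvmem : ∀ k, v k = 0 ∨ v k = 1 ∨ v k = m := by
        intro k; rw [hvdef]; dsimp only
        split_ifs
        · right; left; rfl
        · left; rfl
        · left; rfl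
        · exact hwmem _
      have habsv : ∀ k, |v k| ≤ m := by
        intro k
        rcases hvmem k with h | h | h <;> rw [h]
        · rw [abs_zero]; linarith
        · rw [abs_one]; linarith
        · rw [abs_of_pos (by linarith)]
      have hSv : (∑' k : ℕ, v k / β ^ (k + 1)) =
          (∑ k ∈ Finset.range (i+1), v k / β ^ (k + 1)) +
            (∑' k : ℕ, v (i + 1 + k) / β ^ (k + 1)) / β ^ (i+1) :=
        prefix_split hβ v m habsv (i+1)
      have hSU : (∑' k : ℕ, (if u k then (1:ℝ) else 0) / β ^ (k + 1)) =
          (∑ k ∈ Finset.range (i+1), (if u k then (1:ℝ) else 0) / β ^ (k + 1)) +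
            s / β ^ (i+1) :=
        prefix_split hβ (fun k => if u k then (1:ℝ) else 0) m habsU (i+1)
      have htailv : (∑' k : ℕ, v (i + 1 + k) / β ^ (k + 1)) = 1 + s := by
        rw [tsum_congr (fun k => by rw [hvtail k])]
        exact hwsum
      have hUpre : (∑ k ∈ Finset.range (i+1), (if u k then (1:ℝ) else 0) / β ^ (k + 1)) =
          (∑ k ∈ Finset.range i, (if u k then (1:ℝ) else 0) / β ^ (k + 1)) +
            (if u i then (1:ℝ) else 0) / β ^ (i + 1) :=
        Finset.sum_range_succ _ i
      have hvpre : (∑ k ∈ Finset.range (i+1), v k / β ^ (k + 1)) =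
          (∑ k ∈ Finset.range i, (if u k then (1:ℝ) else 0) / β ^ (k + 1)) := by
        rw [Finset.sum_range_succ, hv_i,
          Finset.sum_congr rfl (fun k hk => by rw [hv_lt k (Finset.mem_range.1 hk)])]
        simp
      have heq : (∑' k : ℕ, v k / β ^ (k + 1)) =
          (∑' k : ℕ, (if u k then (1:ℝ) else 0) / β ^ (k + 1)) := by
        rw [hSv, hSU, htailv, hvpre, hUpre, if_pos hi, add_div]
        ring
      have hvU := huniq v hvmem heq
      have hvi := congrFun hvU i
      rw [hv_i, if_pos hi] at hvi
      exact absurd hvi (by norm_num)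
    · by_contra hle
      push_neg at hle
      have hyM : 1 + s - m ≤ m / (β - 1) := by
        rw [le_div_iff₀ hb1]
        rw [le_div_iff₀ hb1] at hs1
        nlinarith [mul_nonneg (by linarith : (0:ℝ) ≤ m - 1) hb0.le]
      obtain ⟨w, hwmem, hwsum⟩ := exists_expansion m β hm1 hm2 hβ1 hβ2 (1 + s - m)
        (by linarith) hyM
      set v : ℕ → ℝ := fun k =>
        if k < i then (if u k then (1:ℝ) else 0) else if k = i then m else w (k - (i+1))
        with hvdef
      have hv_lt : ∀ k, k < i → v k = (if u k then (1:ℝ) else 0) := by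
        intro k hk; rw [hvdef]; dsimp only; rw [if_pos hk]
      have hv_i : v i = m := by
        rw [hvdef]; dsimp only; rw [if_neg (lt_irrefl i), if_pos rfl]
      have hvtail : ∀ k, v (i + 1 + k) = w k := by
        intro k; rw [hvdef]; dsimp only
        rw [if_neg (by omega), if_neg (by omega)]
        congr 1; omega
      have hvmem : ∀ k, v k = 0 ∨ v k = 1 ∨ v k = m := by
        intro k; rw [hvdef]; dsimp only
        split_ifs
        · right; left; rfl
        · left; rfl
        · right; right; rfl
        · exact hwmem _
      have habsv : ∀ k, |v k| ≤ m := by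
        intro k
        rcases hvmem k with h | h | h <;> rw [h]
        · rw [abs_zero]; linarith
        · rw [abs_one]; linarith
        · rw [abs_of_pos (by linarith)]
      have hSv : (∑' k : ℕ, v k / β ^ (k + 1)) =
          (∑ k ∈ Finset.range (i+1), v k / β ^ (k + 1)) +
            (∑' k : ℕ, v (i + 1 + k) / β ^ (k + 1)) / β ^ (i+1) :=
        prefix_split hβ v m habsv (i+1)
      have hSU : (∑' k : ℕ, (if u k then (1:ℝ) else 0) / β ^ (k + 1)) =
          (∑ k ∈ Finset.range (i+1), (if u k then (1:ℝ) else 0) / β ^ (k + 1)) +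
            s / β ^ (i+1) :=
        prefix_split hβ (fun k => if u k then (1:ℝ) else 0) m habsU (i+1)
      have htailv : (∑' k : ℕ, v (i + 1 + k) / β ^ (k + 1)) = 1 + s - m := by
        rw [tsum_congr (fun k => by rw [hvtail k])]
        exact hwsum
      have hUpre : (∑ k ∈ Finset.range (i+1), (if u k then (1:ℝ) else 0) / β ^ (k + 1)) =
          (∑ k ∈ Finset.range i, (if u k then (1:ℝ) else 0) / β ^ (k + 1)) +
            (if u i then (1:ℝ) else 0) / β ^ (i + 1) :=
        Finset.sum_range_succ _ i
      have hvpre : (∑ k ∈ Finset.range (i+1), v k / β ^ (k + 1)) =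
          (∑ k ∈ Finset.range i, (if u k then (1:ℝ) else 0) / β ^ (k + 1)) +
            m / β ^ (i + 1) := by
        rw [Finset.sum_range_succ, hv_i,
          Finset.sum_congr rfl (fun k hk => by rw [hv_lt k (Finset.mem_range.1 hk)])]
      have heq : (∑' k : ℕ, v k / β ^ (k + 1)) =
          (∑' k : ℕ, (if u k then (1:ℝ) else 0) / β ^ (k + 1)) := by
        rw [hSv, hSU, htailv, hvpre, hUpre, if_pos hi]
        rw [sub_div, add_div]
        ring
      have hvU := huniq v hvmem heq
      have hvi := congrFun hvU i
      rw [hv_i, if_pos hi] at hvi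
      exact absurd hvi (by linarith)
  · -- the conditions imply uniqueness
    intro hcond v hvmem hvsum
    by_contra hne
    have hex : ∃ i, v i ≠ (if u i then (1:ℝ) else 0) := by
      by_contra h
      push_neg at h
      exact hne (funext h)
    set i := Nat.find hex with hidef
    have hspec : v i ≠ (if u i then (1:ℝ) else 0) := Nat.find_spec hex
    have hmin : ∀ k, k < i → v k = (if u k then (1:ℝ) else 0) := fun k hk =>
      not_not.1 (Nat.find_min hex hk)
    have habsv : ∀ k, |v k| ≤ m := by
      intro k
      rcases hvmem k with h | h | h <;> rw [h]
      · rw [abs_zero]; linarith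
      · rw [abs_one]; linarith
      · rw [abs_of_pos (by linarith)]
    have hSv : (∑' k : ℕ, v k / β ^ (k + 1)) =
        (∑ k ∈ Finset.range i, v k / β ^ (k + 1)) +
          (∑' k : ℕ, v (i + k) / β ^ (k + 1)) / β ^ i :=
      prefix_split hβ v m habsv i
    have hSU : (∑' k : ℕ, (if u k then (1:ℝ) else 0) / β ^ (k + 1)) =
        (∑ k ∈ Finset.range i, (if u k then (1:ℝ) else 0) / β ^ (k + 1)) +
          (∑' k : ℕ, (if u (i + k) then (1:ℝ) else 0) / β ^ (k + 1)) / β ^ i :=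
      prefix_split hβ (fun k => if u k then (1:ℝ) else 0) m habsU i
    have hpre : (∑ k ∈ Finset.range i, v k / β ^ (k + 1)) =
        (∑ k ∈ Finset.range i, (if u k then (1:ℝ) else 0) / β ^ (k + 1)) :=
      Finset.sum_congr rfl fun k hk => by rw [hmin k (Finset.mem_range.1 hk)]
    have htails : (∑' k : ℕ, v (i + k) / β ^ (k + 1)) =
        (∑' k : ℕ, (if u (i + k) then (1:ℝ) else 0) / β ^ (k + 1)) := by
      have hpow : (β:ℝ) ^ i ≠ 0 := (pow_pos hb0 i).ne'
      have h1 : (∑' k : ℕ, v (i + k) / β ^ (k + 1)) / β ^ i =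
          (∑' k : ℕ, (if u (i + k) then (1:ℝ) else 0) / β ^ (k + 1)) / β ^ i := by
        linarith [hvsum, hSv, hSU, hpre]
      exact div_cancel hpow h1
    have hheadv : (∑' k : ℕ, v (i + k) / β ^ (k + 1)) =
        v i / β + (∑' k : ℕ, v (i + 1 + k) / β ^ (k + 1)) / β :=
      tail_head hβ v m habsv i
    have hheadU : (∑' k : ℕ, (if u (i + k) then (1:ℝ) else 0) / β ^ (k + 1)) =
        (if u i then (1:ℝ) else 0) / β +
          (∑' k : ℕ, (if u (i + 1 + k) then (1:ℝ) else 0) / β ^ (k + 1)) / β :=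
      tail_head hβ (fun k => if u k then (1:ℝ) else 0) m habsU i
    have key : v i + (∑' k : ℕ, v (i + 1 + k) / β ^ (k + 1)) =
        (if u i then (1:ℝ) else 0) +
          (∑' k : ℕ, (if u (i + 1 + k) then (1:ℝ) else 0) / β ^ (k + 1)) := by
      have h2 : (v i + (∑' k : ℕ, v (i + 1 + k) / β ^ (k + 1))) / β =
          ((if u i then (1:ℝ) else 0) +
            (∑' k : ℕ, (if u (i + 1 + k) then (1:ℝ) else 0) / β ^ (k + 1))) / β := by
        rw [add_div, add_div]
        linarith [htails, hheadv, hheadU]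
      exact div_cancel hb0.ne' h2
    have hTv0 : 0 ≤ (∑' k : ℕ, v (i + 1 + k) / β ^ (k + 1)) :=
      tsum_nonneg' hβ (fun k => v (i + 1 + k)) (fun k => by
        rcases hvmem (i + 1 + k) with h | h | h <;> rw [h] <;> linarith)
    have hTvM : (∑' k : ℕ, v (i + 1 + k) / β ^ (k + 1)) ≤ m / (β - 1) :=
      tsum_le_bound hβ (fun k => v (i + 1 + k)) m
        (fun k => by
          rcases hvmem (i + 1 + k) with h | h | h <;> rw [h] <;> linarith)
        (fun k => by
          rcases hvmem (i + 1 + k) with h | h | h <;> rw [h] <;> linarith)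
    have hTU0 : 0 ≤ (∑' k : ℕ, (if u (i + 1 + k) then (1:ℝ) else 0) / β ^ (k + 1)) :=
      tsum_nonneg' hβ (fun k => if u (i + 1 + k) then (1:ℝ) else 0)
        (fun k => by split_ifs <;> norm_num)
    cases hui : u i with
    | true =>
      obtain ⟨hA, hB⟩ := hcond i hui
      rw [if_pos hui] at key hspec
      rcases hvmem i with h | h | h
      · rw [h] at key; linarith
      · exact hspec h
      · rw [h] at key; linarith
    | false =>
      have hne' : ¬ (u i = true) := by simp [hui]
      rw [if_neg hne'] at key hspec
      have hTU1 : (∑' k : ℕ, (if u (i + 1 + k) then (1:ℝ) else 0) / β ^ (k + 1)) < 1 :=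
        tail_lt_one m hm1 hm2 hβ1 u (fun j hj => (hcond j hj).2) (i + 1)
      rcases hvmem i with h | h | h
      · exact hspec h
      · rw [h] at key; linarith
      · rw [h] at key; linarith
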